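/- Let S be a decision rule system with n(S) > 0, and let α = {a_{i_1}=δ_1, …, a_{i_m}=δ_m} be a consistent equation system such that a_{i_1}, …, a_{i_m} ∈ A(S) and, for j = 1, …, m, δ_j ∈ EV_S(a_{i_j}). Then h_EAR(S) ≥ h_EAR(S_α). -/

import Mathlib

/-! Formalization of decision rule systems and decision trees
(Durdymyradov & Moshkov, "Greedy Algorithm for Inference of Decision Trees
from Decision Rule Systems"). -/

/-- Values of attributes: `some δ` is a natural number value, `none` is the
special symbol `*` (interpreted as a value not occurring in the system). -/
abbrev Val := Option ℕ

/-- A decision rule `(a_{i₁}=δ₁) ∧ ⋯ ∧ (a_{iₘ}=δₘ) → σ`: the left-hand side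
is a finite set of equations (attribute, value), the right-hand side a decision. -/
structure Rule where
  lhs : Finset (ℕ × ℕ)
  rhs : ℕ
deriving DecidableEq

namespace Rule

/-- `A(r)`: the set of attributes of a rule. -/
def attrs (r : Rule) : Finset ℕ := r.lhs.image Prod.fst

/-- `K(r)`: the equation system of the left-hand side of a rule. -/
def K (r : Rule) : Finset (ℕ × Val) := r.lhs.image (fun p => (p.1, some p.2))

/-- the length of a rule -/
def len (r : Rule) : ℕ := r.lhs.card

/-- A rule is wellformed if the attributes in its left-hand side are pairwise
different, i.e. each attribute carries at most one equation. -/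
def WF (r : Rule) : Prop := ∀ p ∈ r.lhs, ∀ q ∈ r.lhs, p.1 = q.1 → p = q

end Rule

/-- `A(S)`: the set of attributes of a system of decision rules. -/
def attrsS (S : Finset Rule) : Finset ℕ := S.biUnion Rule.attrs

/-- `n(S) = |A(S)|`. -/
def nS (S : Finset Rule) : ℕ := (attrsS S).card

/-- `d(S)`: maximum length of a rule of `S`. -/
def dS (S : Finset Rule) : ℕ := S.sup Rule.len

/-- `V_S(a)`: the set of values δ such that the equation `a = δ` occurs in `S`. -/
def VS (S : Finset Rule) (a : ℕ) : Finset ℕ :=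
  S.biUnion (fun r => (r.lhs.filter (fun p => p.1 = a)).image Prod.snd)

/-- `EV_S(a) = V_S(a) ∪ {*}`. -/
def EVS (S : Finset Rule) (a : ℕ) : Finset Val := insert none ((VS S a).image some)

/-- `k(S) = max{|V_S(a)| : a ∈ A(S)}`. -/
def kS (S : Finset Rule) : ℕ := (attrsS S).sup (fun a => (VS S a).card)

/-- A (wellformed) decision rule system: a finite nonempty set of wellformed rules. -/
def SysWF (S : Finset Rule) : Prop := S.Nonempty ∧ ∀ r ∈ S, r.WF

/-- An equation system is consistent if it does not assign two different values
to the same attribute. -/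
def Consistent (E : Finset (ℕ × Val)) : Prop :=
  ∀ p ∈ E, ∀ q ∈ E, p.1 = q.1 → p.2 = q.2

instance : DecidablePred Consistent := fun E => by unfold Consistent; infer_instance

/-- `r_α`: the rule obtained from `r` by deleting from its left-hand side all
equations belonging to `α`. -/
def Rule.restrict (r : Rule) (α : Finset (ℕ × Val)) : Rule :=
  ⟨r.lhs.filter (fun p => ((p.1, (some p.2 : Val)) ∉ α)), r.rhs⟩

/-- `S_α`: the set of rules `r_α` for `r ∈ S` with `K(r) ∪ α` consistent. -/
def sysRestrict (S : Finset Rule) (α : Finset (ℕ × Val)) : Finset Rule :=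
  (S.filter (fun r => Consistent (r.K ∪ α))).image (fun r => r.restrict α)

/-- Extended decision trees: terminal nodes are labeled with sets of rules, and a
working node is labeled with an attribute and has one child for each value
(only the children corresponding to values in `EV_S(a)` are relevant). -/
inductive DT where
  | leaf (τ : Finset Rule) : DT
  | node (a : ℕ) (c : Val → DT) : DT

/-- `Γ` is an extended decision tree over `S`: working nodes are labeled with
attributes of `A(S)` (with edges labeled by the elements of `EV_S(a)`),
terminal nodes with subsets of `S`. -/
def DT.Over (S : Finset Rule) : DT → Prop
  | .leaf τ => τ ⊆ S
  | .node a c => a ∈ attrsS S ∧ ∀ v ∈ EVS S a, DT.Over S (c v)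

/-- `h(Γ)`: the maximum number of working nodes in a complete path of `Γ`. -/
def DT.depth (S : Finset Rule) : DT → ℕ
  | .leaf _ => 0
  | .node a c => 1 + (EVS S a).sup (fun v => DT.depth S (c v))

/-- The number of terminal nodes of `Γ`. -/
def DT.numLeaves (S : Finset Rule) : DT → ℕ
  | .leaf _ => 1
  | .node a c => ∑ v ∈ EVS S a, DT.numLeaves S (c v)

/-- `Γ` solves `EAR(S)` starting from the already accumulated equation system `E`:
for every complete path `ξ` with consistent `K(ξ)`, every rule of the terminal
label `τ(ξ)` satisfies `K(r) ⊆ K(ξ)`, and every other rule of `S` has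
`K(r) ∪ K(ξ)` inconsistent. -/
def DT.SolvesFrom (S : Finset Rule) : DT → Finset (ℕ × Val) → Prop
  | .leaf τ, E => Consistent E →
      (∀ r ∈ τ, r.K ⊆ E) ∧ ∀ r ∈ S, r ∉ τ → ¬ Consistent (r.K ∪ E)
  | .node a c, E => ∀ v ∈ EVS S a, DT.SolvesFrom S (c v) (insert (a, v) E)

/-- `Γ` is a decision tree over `S` solving the problem `EAR(S)`. -/
def DT.SolvesEAR (S : Finset Rule) (Γ : DT) : Prop := Γ.Over S ∧ Γ.SolvesFrom S ∅

/-- `h_EAR(S)`: the minimum depth of a decision tree over `S` solving `EAR(S)`. -/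
noncomputable def hEAR (S : Finset Rule) : ℕ :=
  sInf {n | ∃ Γ : DT, DT.SolvesEAR S Γ ∧ DT.depth S Γ = n}

/-- A node cover of the hypergraph `G(S)`. -/
def IsNodeCover (S : Finset Rule) (B : Finset ℕ) : Prop :=
  B ⊆ attrsS S ∧ ∀ r ∈ S, r.attrs.Nonempty → (r.attrs ∩ B).Nonempty

/-- `β(S)`: the minimum cardinality of a node cover of `G(S)`. -/
noncomputable def betaS (S : Finset Rule) : ℕ :=
  sInf {k | ∃ B : Finset ℕ, IsNodeCover S B ∧ B.card = k}

/-- `M` is a possible choice of `S^max`: a set of rules of `S` of length `d(S)`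
containing exactly one representative from each equivalence class
(`r₁ ∼ r₂ iff K(r₁) = K(r₂)`) of the set of rules of length `d(S)`, and
no other rules. -/
def IsMaxSet (S M : Finset Rule) : Prop :=
  (∀ r ∈ M, r ∈ S ∧ r.len = dS S) ∧
  (∀ r ∈ S, r.len = dS S → ∃ r' ∈ M, r'.K = r.K) ∧
  (∀ r₁ ∈ M, ∀ r₂ ∈ M, r₁.K = r₂.K → r₁ = r₂)

/-- `δ̄ ∈ EV(S)`, a tuple represented as a function on attributes. -/
def InEV (S : Finset Rule) (f : ℕ → Val) : Prop := ∀ a ∈ attrsS S, f a ∈ EVS S a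

/-- `K(S, δ̄)`. -/
def KofTuple (S : Finset Rule) (f : ℕ → Val) : Finset (ℕ × Val) :=
  (attrsS S).image (fun a => (a, f a))

/-- The rule `r` is realizable for the tuple `δ̄`, i.e. `K(r) ⊆ K(S, δ̄)`. -/
def Realizable (S : Finset Rule) (f : ℕ → Val) (r : Rule) : Prop :=
  r.K ⊆ KofTuple S f

instance (S : Finset Rule) (f : ℕ → Val) : DecidablePred (Realizable S f) :=
  fun r => by unfold Realizable; infer_instance

/-! ### Auxiliary machinery for Lemma 1 -/

/-- Attributes occurring in an equation system. -/
def attrsOf (α : Finset (ℕ × Val)) : Finset ℕ := α.image Prod.fst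

lemma mem_attrsOf {α : Finset (ℕ × Val)} {p : ℕ × Val} (hp : p ∈ α) :
    p.1 ∈ attrsOf α := Finset.mem_image_of_mem _ hp

/-- An attribute is kept by the transformation if it is not assigned by `α`
and still occurs in `S_α`. -/
def Keep (S : Finset Rule) (α : Finset (ℕ × Val)) (a : ℕ) : Prop :=
  a ∉ attrsOf α ∧ a ∈ attrsS (sysRestrict S α)

instance (S : Finset Rule) (α : Finset (ℕ × Val)) : DecidablePred (Keep S α) :=
  fun a => by unfold Keep; infer_instance

/-- The value assigned by `α` to attribute `a` (or `*` if none). -/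
noncomputable def skipVal (α : Finset (ℕ × Val)) (a : ℕ) : Val :=
  match α.toList.find? (fun p => p.1 == a) with
  | some p => p.2
  | none => none

lemma skipVal_mem {α : Finset (ℕ × Val)} {a : ℕ} (h : a ∈ attrsOf α) :
    (a, skipVal α a) ∈ α := by
  unfold skipVal
  rcases hf : α.toList.find? (fun p => p.1 == a) with _ | q
  case none =>
    exfalso
    rcases Finset.mem_image.1 h with ⟨p, hp, hpa⟩
    have := List.find?_eq_none.1 hf p (Finset.mem_toList.2 hp)
    simp [hpa] at this
  case some =>
    rw [hf]
    have h1 : q ∈ α.toList := List.mem_of_find?_eq_some hf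
    have h2 : q.1 = a := by simpa using List.find?_some hf
    have h3 : (a, q.2) = q := by rw [← h2]
    rw [h3]
    exact Finset.mem_toList.1 h1

lemma skipVal_none {α : Finset (ℕ × Val)} {a : ℕ} (h : a ∉ attrsOf α) :
    skipVal α a = none := by
  unfold skipVal
  rcases hf : α.toList.find? (fun p => p.1 == a) with _ | q
  case none => rw [hf]
  case some =>
    exfalso
    have h1 : q ∈ α.toList := List.mem_of_find?_eq_some hf
    have h2 : q.1 = a := by simpa using List.find?_some hf
    exact h (h2 ▸ mem_attrsOf (Finset.mem_toList.1 h1))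

/-- The tree transformation: restrict a tree over `S` to a tree over `S_α`. -/
noncomputable def rt (S : Finset Rule) (α : Finset (ℕ × Val)) : DT → DT
  | .leaf τ => .leaf (sysRestrict τ α)
  | .node a c =>
      if Keep S α a then .node a (fun v => rt S α (c v))
      else rt S α (c (skipVal α a))
  termination_by structural Γ => Γ

lemma restrict_lhs_subset (r : Rule) (α : Finset (ℕ × Val)) :
    (r.restrict α).lhs ⊆ r.lhs := Finset.filter_subset _ _

lemma VS_restrict_subset (S : Finset Rule) (α : Finset (ℕ × Val)) (a : ℕ) :
    VS (sysRestrict S α) a ⊆ VS S a := by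
  intro δ hδ
  rcases Finset.mem_biUnion.1 hδ with ⟨r', hr', hδ'⟩
  rcases Finset.mem_image.1 hr' with ⟨r, hr, hrr⟩
  have hrS : r ∈ S := (Finset.mem_filter.1 hr).1
  refine Finset.mem_biUnion.2 ⟨r, hrS, ?_⟩
  rcases Finset.mem_image.1 hδ' with ⟨p, hp, hps⟩
  have hp1 := Finset.mem_filter.1 hp
  have hpl : p ∈ r.lhs := by
    have : p ∈ (r.restrict α).lhs := hrr ▸ hp1.1
    exact restrict_lhs_subset r α this
  exact Finset.mem_image.2 ⟨p, Finset.mem_filter.2 ⟨hpl, hp1.2⟩, hps⟩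

lemma EVS_restrict_subset (S : Finset Rule) (α : Finset (ℕ × Val)) (a : ℕ) :
    EVS (sysRestrict S α) a ⊆ EVS S a :=
  Finset.insert_subset_insert _ (Finset.image_subset_image (VS_restrict_subset S α a))

lemma sysRestrict_mono {τ S : Finset Rule} (α : Finset (ℕ × Val)) (h : τ ⊆ S) :
    sysRestrict τ α ⊆ sysRestrict S α :=
  Finset.image_subset_image (Finset.filter_subset_filter _ h)

lemma K_restrict_subset (r : Rule) (α : Finset (ℕ × Val)) :
    (r.restrict α).K ⊆ r.K := by
  intro p hp
  rcases Finset.mem_image.1 hp with ⟨q, hq, hqp⟩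
  exact Finset.mem_image.2 ⟨q, restrict_lhs_subset r α hq, hqp⟩

lemma mem_K_restrict_of {r : Rule} {α : Finset (ℕ × Val)} {p : ℕ × Val}
    (hp : p ∈ r.K) (h : p ∉ α) : p ∈ (r.restrict α).K := by
  rcases Finset.mem_image.1 hp with ⟨q, hq, hqp⟩
  refine Finset.mem_image.2 ⟨q, Finset.mem_filter.2 ⟨hq, ?_⟩, hqp⟩
  intro hc; exact h (hqp ▸ hc)

lemma K_restrict_not_mem {r : Rule} {α : Finset (ℕ × Val)} {p : ℕ × Val}
    (hp : p ∈ (r.restrict α).K) : p ∉ α := by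
  rcases Finset.mem_image.1 hp with ⟨q, hq, hqp⟩
  have := (Finset.mem_filter.1 hq).2
  intro hc; exact this (hqp ▸ hc)

lemma mem_attrsS_of_K {S : Finset Rule} {r : Rule} {p : ℕ × Val}
    (hr : r ∈ S) (hp : p ∈ r.K) : p.1 ∈ attrsS S := by
  rcases Finset.mem_image.1 hp with ⟨q, hq, hqp⟩
  refine Finset.mem_biUnion.2 ⟨r, hr, ?_⟩
  have : q.1 = p.1 := by rw [← hqp]
  exact this ▸ Finset.mem_image_of_mem _ hq

lemma restrict_mem_sysRestrict {S : Finset Rule} {α : Finset (ℕ × Val)} {r : Rule}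
    (hr : r ∈ S) (h : Consistent (r.K ∪ α)) : r.restrict α ∈ sysRestrict S α :=
  Finset.mem_image.2 ⟨r, Finset.mem_filter.2 ⟨hr, h⟩, rfl⟩

/-- The compatibility invariant on the accumulated equation system. -/
def Good (S : Finset Rule) (α : Finset (ℕ × Val)) (E : Finset (ℕ × Val)) : Prop :=
  ∀ p ∈ E, Keep S α p.1 ∨ p ∈ α ∨
    (p.2 = none ∧ p.1 ∉ attrsOf α ∧ p.1 ∉ attrsS (sysRestrict S α))
lemma consistent_of_cover (S : Finset Rule) (α : Finset (ℕ × Val))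
    (C T : Finset (ℕ × Val)) (hcons : Consistent α) (hT : Consistent T)
    (hTα : ∀ p ∈ T, ∀ q ∈ α, p.1 = q.1 → p.2 = q.2)
    (hTA : ∀ p ∈ T, p.1 ∈ attrsOf α ∨ p.1 ∈ attrsS (sysRestrict S α))
    (hcls : ∀ p ∈ C, p ∈ T ∨ p ∈ α ∨
      (p.2 = none ∧ p.1 ∉ attrsOf α ∧ p.1 ∉ attrsS (sysRestrict S α))) :
    Consistent C := by
  intro p hp q hq h1
  rcases hcls p hp with hpT | hpα | hpN
  · rcases hcls q hq with hqT | hqα | hqN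
    · exact hT p hpT q hqT h1
    · exact hTα p hpT q hqα h1
    · rcases hTA p hpT with h | h
      · exact absurd (h1 ▸ h) hqN.2.1
      · exact absurd (h1 ▸ h) hqN.2.2
  · rcases hcls q hq with hqT | hqα | hqN
    · exact (hTα q hqT p hpα h1.symm).symm
    · exact hcons p hpα q hqα h1
    · exact absurd (h1 ▸ mem_attrsOf hpα) hqN.2.1
  · rcases hcls q hq with hqT | hqα | hqN
    · rcases hTA q hqT with h | h
      · exact absurd (h1 ▸ h : p.1 ∈ attrsOf α) hpN.2.1
      · exact absurd (h1 ▸ h : p.1 ∈ attrsS (sysRestrict S α)) hpN.2.2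
    · exact absurd (h1 ▸ mem_attrsOf hqα : p.1 ∈ attrsOf α) hpN.2.1
    · rw [hpN.1, hqN.1]

lemma cons_unfilter {S : Finset Rule} {α : Finset (ℕ × Val)} {E : Finset (ℕ × Val)}
    (hcons : Consistent α) (hG : Good S α E)
    (hE' : Consistent (E.filter (fun p => Keep S α p.1))) : Consistent E := by
  refine consistent_of_cover S α E _ hcons hE' ?_ ?_ ?_
  · intro p hp q hq h1
    exact absurd (h1 ▸ mem_attrsOf hq) (Finset.mem_filter.1 hp).2.1
  · intro p hp
    exact Or.inr (Finset.mem_filter.1 hp).2.2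
  · intro p hp
    rcases hG p hp with h | h | h
    · exact Or.inl (Finset.mem_filter.2 ⟨hp, h⟩)
    · exact Or.inr (Or.inl h)
    · exact Or.inr (Or.inr h)

lemma cons_lift {S : Finset Rule} {α : Finset (ℕ × Val)} {r : Rule}
    {E : Finset (ℕ × Val)} (hcons : Consistent α)
    (hr : r ∈ S) (hrα : Consistent (r.K ∪ α)) (hG : Good S α E)
    (hC : Consistent ((r.restrict α).K ∪ E.filter (fun p => Keep S α p.1))) :
    Consistent (r.K ∪ E) := by
  refine consistent_of_cover S α _ _ hcons hC ?_ ?_ ?_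
  · intro p hp q hq h1
    rcases Finset.mem_union.1 hp with h | h
    · exact hrα p (Finset.mem_union_left _ (K_restrict_subset r α h)) q
        (Finset.mem_union_right _ hq) h1
    · exact absurd (h1 ▸ mem_attrsOf hq) (Finset.mem_filter.1 h).2.1
  · intro p hp
    rcases Finset.mem_union.1 hp with h | h
    · exact Or.inr (mem_attrsS_of_K (restrict_mem_sysRestrict hr hrα) h)
    · exact Or.inr (Finset.mem_filter.1 h).2.2
  · intro p hp
    rcases Finset.mem_union.1 hp with h | h
    · by_cases hpα : p ∈ α
      · exact Or.inr (Or.inl hpα)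
      · exact Or.inl (Finset.mem_union_left _ (mem_K_restrict_of h hpα))
    · rcases hG p h with hk | hk | hk
      · exact Or.inl (Finset.mem_union_right _ (Finset.mem_filter.2 ⟨h, hk⟩))
      · exact Or.inr (Or.inl hk)
      · exact Or.inr (Or.inr hk)

lemma rt_over (S : Finset Rule) (α : Finset (ℕ × Val))
    (hα : ∀ p ∈ α, p.1 ∈ attrsS S ∧ p.2 ∈ EVS S p.1) :
    ∀ Γ : DT, Γ.Over S → (rt S α Γ).Over (sysRestrict S α) := by
  intro Γ
  induction Γ with
  | leaf τ =>
    intro hov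
    exact sysRestrict_mono α hov
  | node a c ih =>
    intro hov
    by_cases hk : Keep S α a
    · rw [rt, if_pos hk]
      exact ⟨hk.2, fun v hv => ih v (hov.2 v (EVS_restrict_subset S α a hv))⟩
    · rw [rt, if_neg hk]
      have hw : skipVal α a ∈ EVS S a := by
        by_cases ha : a ∈ attrsOf α
        · exact (hα _ (skipVal_mem ha)).2
        · rw [skipVal_none ha]; exact Finset.mem_insert_self _ _
      exact ih _ (hov.2 _ hw)

lemma rt_depth (S : Finset Rule) (α : Finset (ℕ × Val))
    (hα : ∀ p ∈ α, p.1 ∈ attrsS S ∧ p.2 ∈ EVS S p.1) :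
    ∀ Γ : DT, (rt S α Γ).depth (sysRestrict S α) ≤ Γ.depth S := by
  intro Γ
  induction Γ with
  | leaf τ => exact le_refl 0
  | node a c ih =>
    by_cases hk : Keep S α a
    · rw [rt, if_pos hk]
      show 1 + _ ≤ 1 + _
      refine Nat.add_le_add_left (Finset.sup_le fun v hv => ?_) 1
      exact le_trans (ih v) (Finset.le_sup (f := fun v => DT.depth S (c v)) (EVS_restrict_subset S α a hv))
    · rw [rt, if_neg hk]
      have hw : skipVal α a ∈ EVS S a := by
        by_cases ha : a ∈ attrsOf α
        · exact (hα _ (skipVal_mem ha)).2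
        · rw [skipVal_none ha]; exact Finset.mem_insert_self _ _
      refine le_trans (ih _) (le_trans (Finset.le_sup (f := fun v => DT.depth S (c v)) hw) ?_)
      exact Nat.le_add_left _ 1
lemma good_insert_keep {S : Finset Rule} {α E : Finset (ℕ × Val)} {a : ℕ} {v : Val}
    (hk : Keep S α a) (hG : Good S α E) : Good S α (insert (a, v) E) := by
  intro p hp
  rcases Finset.mem_insert.1 hp with h | h
  · exact Or.inl (h ▸ hk)
  · exact hG p h

lemma rt_solves (S : Finset Rule) (α : Finset (ℕ × Val)) (hcons : Consistent α)
    (hα : ∀ p ∈ α, p.1 ∈ attrsS S ∧ p.2 ∈ EVS S p.1) :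
    ∀ (Γ : DT) (E : Finset (ℕ × Val)), Γ.Over S → Γ.SolvesFrom S E → Good S α E →
      (rt S α Γ).SolvesFrom (sysRestrict S α) (E.filter (fun p => Keep S α p.1)) := by
  intro Γ
  induction Γ with
  | leaf τ =>
    intro E hov hsol hG
    rw [rt]
    intro hE'
    have hE : Consistent E := cons_unfilter hcons hG hE'
    obtain ⟨h1, h2⟩ := hsol hE
    constructor
    · -- every rule of the restricted leaf label is realized
      intro r' hr'
      rcases Finset.mem_image.1 hr' with ⟨r, hr, hrr⟩
      have hrτ : r ∈ τ := (Finset.mem_filter.1 hr).1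
      have hrα : Consistent (r.K ∪ α) := (Finset.mem_filter.1 hr).2
      intro p hp
      have hpK : p ∈ (r.restrict α).K := hrr ▸ hp
      have hpE : p ∈ E := h1 r hrτ (K_restrict_subset r α hpK)
      refine Finset.mem_filter.2 ⟨hpE, ?_, ?_⟩
      · -- p.1 is not an attribute of α
        intro hc
        rcases Finset.mem_image.1 hc with ⟨q, hq, hq1⟩
        have : p.2 = q.2 := hrα p (Finset.mem_union_left _ (K_restrict_subset r α hpK))
          q (Finset.mem_union_right _ hq) hq1.symm
        have hpq : p = q := Prod.ext hq1.symm this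
        exact K_restrict_not_mem hpK (hpq ▸ hq)
      · exact mem_attrsS_of_K (restrict_mem_sysRestrict (hov hrτ) hrα) hpK
    · intro r' hr' hr'τ hcon
      rcases Finset.mem_image.1 hr' with ⟨r, hr, hrr⟩
      have hrS : r ∈ S := (Finset.mem_filter.1 hr).1
      have hrα : Consistent (r.K ∪ α) := (Finset.mem_filter.1 hr).2
      by_cases hrτ : r ∈ τ
      · exact hr'τ (Finset.mem_image.2 ⟨r, Finset.mem_filter.2 ⟨hrτ, hrα⟩, hrr⟩)
      · exact h2 r hrS hrτ (cons_lift hcons hrS hrα hG (hrr ▸ hcon))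
  | node a c ih =>
    intro E hov hsol hG
    by_cases hk : Keep S α a
    · rw [rt, if_pos hk]
      intro v hv
      have hv' : v ∈ EVS S a := EVS_restrict_subset S α a hv
      have := ih v (insert (a, v) E) (hov.2 v hv') (hsol v hv')
        (good_insert_keep hk hG)
      rwa [Finset.filter_insert, if_pos hk] at this
    · rw [rt, if_neg hk]
      have hw : skipVal α a ∈ EVS S a := by
        by_cases ha : a ∈ attrsOf α
        · exact (hα _ (skipVal_mem ha)).2
        · rw [skipVal_none ha]; exact Finset.mem_insert_self _ _
      have hG' : Good S α (insert (a, skipVal α a) E) := by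
        intro p hp
        rcases Finset.mem_insert.1 hp with h | h
        · by_cases ha : a ∈ attrsOf α
          · exact Or.inr (Or.inl (h ▸ skipVal_mem ha))
          · refine Or.inr (Or.inr ?_)
            rw [h]
            refine ⟨skipVal_none ha, ha, ?_⟩
            intro hmem
            exact hk ⟨ha, hmem⟩
        · exact hG p h
      have := ih (skipVal α a) (insert (a, skipVal α a) E) (hov.2 _ hw) (hsol _ hw) hG'
      rwa [Finset.filter_insert, if_neg hk] at this
/-- The full decision tree querying the attributes of `L` in order. -/
def fullTree (S : Finset Rule) : List ℕ → Finset (ℕ × Val) → DT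
  | [], E => .leaf (S.filter (fun r => r.K ⊆ E))
  | a :: L, E => .node a (fun v => fullTree S L (insert (a, v) E))

lemma fullTree_over (S : Finset Rule) :
    ∀ (L : List ℕ) (E : Finset (ℕ × Val)), (∀ a ∈ L, a ∈ attrsS S) →
      (fullTree S L E).Over S := by
  intro L
  induction L with
  | nil => intro E _; exact Finset.filter_subset _ _
  | cons a L ih =>
    intro E hL
    exact ⟨hL a List.mem_cons_self, fun v _ =>
      ih (insert (a, v) E) (fun b hb => hL b (List.mem_cons_of_mem a hb))⟩

lemma fullTree_solves (S : Finset Rule) :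
    ∀ (L : List ℕ) (E : Finset (ℕ × Val)),
      (∀ a ∈ attrsS S, a ∈ L ∨ ∃ v, (a, v) ∈ E) →
      (fullTree S L E).SolvesFrom S E := by
  intro L
  induction L with
  | nil =>
    intro E hP hE
    constructor
    · intro r hr
      exact (Finset.mem_filter.1 hr).2
    · intro r hr hrτ hc
      have hKE : ¬ r.K ⊆ E := fun h => hrτ (Finset.mem_filter.2 ⟨hr, h⟩)
      rcases Finset.not_subset.1 hKE with ⟨p, hpK, hpE⟩
      have ha : p.1 ∈ attrsS S := mem_attrsS_of_K hr hpK
      rcases hP p.1 ha with h | ⟨v, hv⟩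
      · exact absurd h List.not_mem_nil
      · have := hc p (Finset.mem_union_left _ hpK) (p.1, v) (Finset.mem_union_right _ hv) rfl
        exact hpE (by rw [show p = (p.1, v) from Prod.ext rfl this]; exact hv)
  | cons a L ih =>
    intro E hP v hv
    refine ih (insert (a, v) E) ?_
    intro b hb
    rcases hP b hb with h | ⟨w, hw⟩
    · rcases List.mem_cons.1 h with h | h
      · exact Or.inr ⟨v, h ▸ Finset.mem_insert_self _ _⟩
      · exact Or.inl h
    · exact Or.inr ⟨w, Finset.mem_insert_of_mem hw⟩

lemma hEAR_set_nonempty (S : Finset Rule) :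
    {n | ∃ Γ : DT, DT.SolvesEAR S Γ ∧ DT.depth S Γ = n}.Nonempty := by
  refine ⟨_, fullTree S (attrsS S).toList ∅, ⟨?_, ?_⟩, rfl⟩
  · exact fullTree_over S _ ∅ (fun a ha => Finset.mem_toList.1 ha)
  · exact fullTree_solves S _ ∅ (fun a ha => Or.inl (Finset.mem_toList.2 ha))
/-- Lemma 1: Let `S` be a decision rule system with `n(S) > 0` and `α` be a
consistent equation system whose attributes belong to `A(S)` and whose values
satisfy `δ ∈ EV_S(a)`. Then `h_EAR(S) ≥ h_EAR(S_α)`. -/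
theorem hEAR_restrict_le (S : Finset Rule) (hS : SysWF S) (hn : 0 < nS S)
    (α : Finset (ℕ × Val)) (hcons : Consistent α)
    (hα : ∀ p ∈ α, p.1 ∈ attrsS S ∧ p.2 ∈ EVS S p.1) :
    hEAR (sysRestrict S α) ≤ hEAR S := by
  obtain ⟨Γ, ⟨hov, hsol⟩, hd⟩ := Nat.sInf_mem (hEAR_set_nonempty S)
  have hsol' : (rt S α Γ).SolvesFrom (sysRestrict S α) ∅ := by
    have := rt_solves S α hcons hα Γ ∅ hov hsol (fun p hp => absurd hp (Finset.notMem_empty p))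
    rwa [Finset.filter_empty] at this
  have h1 : hEAR (sysRestrict S α) ≤ DT.depth (sysRestrict S α) (rt S α Γ) :=
    Nat.sInf_le ⟨rt S α Γ, ⟨rt_over S α hα Γ hov, hsol'⟩, rfl⟩
  have h2 : DT.depth (sysRestrict S α) (rt S α Γ) ≤ DT.depth S Γ := rt_depth S α hα Γ
  have h3 : DT.depth S Γ = hEAR S := hd
  exact h1.trans (h2.trans h3.le)
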